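/- Let g, r ∈ H, Λ ⊆ 𝒥, ζ ∈ [0, 1/2) and ω₁ ∈ (0,1), and set ω̂ = (ω₁(1−ζ)+ζ)/(1−2ζ). If ‖r − g‖ ≤ ζ‖g‖ and ‖g|_Λ‖ ≥ ω̂‖g‖, then ‖r|_Λ‖ ≥ ω₁‖r‖. -/
import Mathlib


open Classical in
/-- Coordinatewise restriction of an element of `ℓ²(𝒥)` to a subset `Λ ⊆ 𝒥`
(entries outside `Λ` set to zero). -/
noncomputable def restr {J : Type*} (Λ : Set J) (v : lp (fun _ : J => ℝ) 2) :
    lp (fun _ : J => ℝ) 2 :=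
  ⟨fun i => if i ∈ Λ then v i else 0, by
    have hv : Memℓp (fun i => v i) 2 := lp.memℓp v
    have : Memℓp (fun i => if i ∈ Λ then v i else 0) 2 := by
      rw [memℓp_gen_iff (by norm_num)] at hv ⊢
      refine Summable.of_nonneg_of_le (fun i => ?_) (fun i => ?_) hv
      · positivity
      · by_cases h : i ∈ Λ <;> simp [h] <;> positivity
    exact this⟩

open Classical in
lemma restr_apply {J : Type*} (Λ : Set J) (v : lp (fun _ : J => ℝ) 2) (i : J) :
    restr Λ v i = if i ∈ Λ then v i else 0 := rfl

lemma norm_restr_le {J : Type*} (Λ : Set J) (v : lp (fun _ : J => ℝ) 2) :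
    ‖restr Λ v‖ ≤ ‖v‖ := by
  have hp : (0:ℝ) < (2 : ENNReal).toReal := by norm_num
  refine lp.norm_le_of_tsum_le hp (norm_nonneg _) ?_
  rw [lp.norm_rpow_eq_tsum hp]
  refine Summable.tsum_le_tsum (fun i => ?_) ?_ ((lp.memℓp v).summable hp)
  · rw [restr_apply]; split_ifs with h
    · exact le_rfl
    · simp; positivity
  · exact (lp.memℓp (restr Λ v)).summable hp

lemma restr_sub {J : Type*} (Λ : Set J) (a b : lp (fun _ : J => ℝ) 2) :
    restr Λ (a - b) = restr Λ a - restr Λ b := by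
  ext i
  simp only [restr_apply, lp.coeFn_sub, Pi.sub_apply]
  split_ifs <;> simp

/-- Let `g, r ∈ H = ℓ²(𝒥)`, `Λ ⊆ 𝒥`, `ζ ∈ [0, 1/2)` and `ω₁ ∈ (0,1)`, and set
`ω̂ = (ω₁(1−ζ)+ζ)/(1−2ζ)`. If `‖r − g‖ ≤ ζ‖g‖` and `‖g|_Λ‖ ≥ ω̂‖g‖`,
then `‖r|_Λ‖ ≥ ω₁‖r‖`. -/
theorem stmt_16 {J : Type*} [Countable J]
    (g r : lp (fun _ : J => ℝ) 2) (Λ : Set J) (ζ ω₁ : ℝ)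
    (hζ0 : 0 ≤ ζ) (hζ : ζ < 1 / 2) (hω₁0 : 0 < ω₁) (hω₁1 : ω₁ < 1)
    (h1 : ‖r - g‖ ≤ ζ * ‖g‖)
    (h2 : (ω₁ * (1 - ζ) + ζ) / (1 - 2 * ζ) * ‖g‖ ≤ ‖restr Λ g‖) :
    ω₁ * ‖r‖ ≤ ‖restr Λ r‖ := by
  have hd : 0 < 1 - 2 * ζ := by linarith
  have hg : (0:ℝ) ≤ ‖g‖ := norm_nonneg _
  -- ‖r‖ ≤ (1+ζ)‖g‖
  have hr : ‖r‖ ≤ (1 + ζ) * ‖g‖ := by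
    calc ‖r‖ = ‖g + (r - g)‖ := by rw [add_sub_cancel]
    _ ≤ ‖g‖ + ‖r - g‖ := norm_add_le _ _
    _ ≤ ‖g‖ + ζ * ‖g‖ := by linarith
    _ = (1 + ζ) * ‖g‖ := by ring
  -- lower bound for ‖restr Λ r‖
  have key : ‖restr Λ g‖ - ζ * ‖g‖ ≤ ‖restr Λ r‖ := by
    have h3 : ‖restr Λ g - restr Λ r‖ ≤ ζ * ‖g‖ := by
      rw [← restr_sub]
      calc ‖restr Λ (g - r)‖ ≤ ‖g - r‖ := norm_restr_le _ _
      _ = ‖r - g‖ := by rw [norm_sub_rev]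
      _ ≤ ζ * ‖g‖ := h1
    have := norm_sub_norm_le (restr Λ g) (restr Λ r)
    linarith
  have hω : (ω₁ * (1 - ζ) + ζ) / (1 - 2 * ζ) * ‖g‖ - ζ * ‖g‖ ≥ ω₁ * ((1 + ζ) * ‖g‖) := by
    rw [ge_iff_le, le_sub_iff_add_le, div_mul_eq_mul_div, le_div_iff₀ hd]
    nlinarith [mul_nonneg (mul_nonneg hω₁0.le (mul_self_nonneg ζ)) hg,
      mul_nonneg (mul_self_nonneg ζ) hg]
  have := mul_le_mul_of_nonneg_left hr hω₁0.le
  linarith
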